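/- Let R ∈ 𝔗_a be reflexive and S a reflexive digraph such that #𝓗(G',R) ≤ #𝓗(G',S) for every G' ∈ 𝔗_a. Let G ∈ 𝔗_a, 𝓛 a set of subgraphs of G, and B := ⋃_{L ∈ 𝓛} A(L*). Then for every ξ ∈ 𝓜^𝓛(G,R): if the restriction of ι_ξ to B belongs to 𝓘^𝓛(G,S), then #𝓙^𝓛_{G,R}(ξ) ≤ #𝓙^𝓛_{G,S}(ξ). -/

import Mathlib

/-- A finite digraph: a finite nonempty vertex set `V ⊆ ℕ` together with an
arc set `A ⊆ V × V`. -/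
structure Dgraph where
  V : Finset ℕ
  nonempty : V.Nonempty
  A : Finset (ℕ × ℕ)
  A_sub : ∀ p ∈ A, p.1 ∈ V ∧ p.2 ∈ V

namespace Dgraph

/-- The set of proper arcs of `G`, i.e. the arc set of `G*`. -/
def Astar (G : Dgraph) : Finset (ℕ × ℕ) := G.A.filter (fun p => p.1 ≠ p.2)

/-- `G` is reflexive. -/
def IsRefl (G : Dgraph) : Prop := ∀ v ∈ G.V, (v, v) ∈ G.A

/-- `p` is a path in `G` (a nonempty list of pairwise distinct vertices,
consecutive ones joined by arcs).  Its length as a path is `p.length - 1`. -/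
def IsPath (G : Dgraph) (p : List ℕ) : Prop :=
  p ≠ [] ∧ p.Nodup ∧ (∀ v ∈ p, v ∈ G.V) ∧ p.Chain' (fun v w => (v, w) ∈ G.A)

/-- `p` is a path in `G*`. -/
def IsPathStar (G : Dgraph) (p : List ℕ) : Prop :=
  p ≠ [] ∧ p.Nodup ∧ (∀ v ∈ p, v ∈ G.V) ∧ p.Chain' (fun v w => (v, w) ∈ G.A ∧ v ≠ w)

/-- `G*` contains a closed walk. -/
def HasClosedWalkStar (G : Dgraph) : Prop :=
  ∃ p : List ℕ, (∀ v ∈ p, v ∈ G.V) ∧ p.Chain' (fun v w => (v, w) ∈ G.A ∧ v ≠ w) ∧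
    2 ≤ p.length ∧ p.head? = p.getLast?

/-- membership in the class `𝔗ₐ`: `G*` is acyclic. -/
def MemTa (G : Dgraph) : Prop := ¬ G.HasClosedWalkStar

/-- The height of `G`: the maximal length of a path in `G`. -/
noncomputable def height (G : Dgraph) : ℕ :=
  sSup {n | ∃ p, G.IsPath p ∧ p.length = n + 1}

/-- The interval `[v,w]_G`. -/
def interval (G : Dgraph) (v w : ℕ) : Finset ℕ :=
  G.V.filter (fun z => (v, z) ∈ G.A ∧ (z, w) ∈ G.A)

/-- `ι(v,w)_G`, the cardinality of the interval `[v,w]_G`. -/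
def iota (G : Dgraph) (v w : ℕ) : ℕ := (G.interval v w).card

/-- The set `𝓗(G,H)` of homomorphisms from `G` to `H` (represented as total
maps `ℕ → ℕ`, normalized to `0` outside of `V(G)`). -/
def Hom (G H : Dgraph) : Set (ℕ → ℕ) :=
  {f | (∀ v ∈ G.V, f v ∈ H.V) ∧ (∀ p ∈ G.A, (f p.1, f p.2) ∈ H.A) ∧
    ∀ v, v ∉ G.V → f v = 0}

/-- The set `𝓢(G,H)` of strict homomorphisms from `G` to `H`. -/
def SHom (G H : Dgraph) : Set (ℕ → ℕ) :=
  {f ∈ Hom G H | ∀ p ∈ G.Astar, f p.1 ≠ f p.2}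

/-- `μ_ξ(G)`, for a homomorphism `ξ` from `G` into `H`. -/
def mu (G H : Dgraph) (f : ℕ → ℕ) : ℕ :=
  ∑ p ∈ G.Astar, H.iota (f p.1) (f p.2)

/-- `L` is a subgraph of `G`. -/
def Subgraph (L G : Dgraph) : Prop := L.V ⊆ G.V ∧ L.A ⊆ G.A

/-- Restriction of a map to a vertex set (normalized to `0` outside). -/
def restrict (X : Finset ℕ) (f : ℕ → ℕ) : ℕ → ℕ := fun x => if x ∈ X then f x else 0

/-- `𝓜(L,H)`: homomorphisms from `L` to `H` with maximal `μ`. -/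
def MSet (L H : Dgraph) : Set (ℕ → ℕ) :=
  {f ∈ Hom L H | ∀ g ∈ Hom L H, mu L H g ≤ mu L H f}

/-- `𝓜^𝓛(G,H)`. -/
def MLSet (G H : Dgraph) (𝓛 : Set Dgraph) : Set (ℕ → ℕ) :=
  {f ∈ Hom G H | ∀ L ∈ 𝓛, restrict L.V f ∈ MSet L H}

/-- `𝓙^𝓛_{G,H'}(ξ)` for `ξ ∈ 𝓗(G,H)`. -/
def JSet (G H H' : Dgraph) (𝓛 : Set Dgraph) (ξ : ℕ → ℕ) : Set (ℕ → ℕ) :=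
  {ζ ∈ Hom G H' | ∀ L ∈ 𝓛, ∀ p ∈ L.Astar,
    H'.iota (ζ p.1) (ζ p.2) = H.iota (ξ p.1) (ξ p.2)}

/-- The digraph `P_×` of a path `P = P_0, …, P_ℓ`: vertex set `{P_0,…,P_ℓ}`
and arcs `P_{i-1}P_i`. -/
def pathGraph (P : List ℕ) (h : P ≠ []) : Dgraph where
  V := P.toFinset
  nonempty := by
    obtain ⟨a, t, rfl⟩ := List.exists_cons_of_ne_nil h
    exact ⟨a, by simp⟩
  A := (P.zip P.tail).toFinset
  A_sub := by
    intro p hp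
    rw [List.mem_toFinset] at hp
    have h1 := List.of_mem_zip hp
    exact ⟨List.mem_toFinset.mpr h1.1, List.mem_toFinset.mpr (List.mem_of_mem_tail h1.2)⟩

/-- `𝓛(G)`: the set of the digraphs `P_×` for the paths `P` of length `h_G` in `G`. -/
def LSet (G : Dgraph) : Set Dgraph :=
  {D | ∃ (P : List ℕ) (h : P ≠ []), G.IsPath P ∧ P.length = G.height + 1 ∧
    D = pathGraph P h}

/-- The class `𝕽`: reflexive digraphs `R ∈ 𝔗ₐ` with
`𝓜^{𝓛(R)}(R,R) ∩ 𝓢(R,R) ≠ ∅`. -/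
def MemR (R : Dgraph) : Prop :=
  R.MemTa ∧ R.IsRefl ∧ (MLSet R R (LSet R) ∩ SHom R R).Nonempty

/-- `G` is a poset: reflexive, antisymmetric and transitive. -/
def IsPoset (G : Dgraph) : Prop :=
  G.IsRefl ∧ (∀ v w, (v, w) ∈ G.A → (w, v) ∈ G.A → v = w) ∧
    (∀ u v w, (u, v) ∈ G.A → (v, w) ∈ G.A → (u, w) ∈ G.A)

/-- The class `𝔗ₐ^{=n}`: digraphs in `𝔗ₐ` of height `n` in which every vertex
lies on a path of length `n`. -/
def MemTaEq (n : ℕ) (G : Dgraph) : Prop :=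
  G.MemTa ∧ G.height = n ∧ ∀ v ∈ G.V, ∃ p, G.IsPath p ∧ p.length = n + 1 ∧ v ∈ p

/-- A maximal path in `G`: no path in `G` properly contains its vertex set. -/
def MaximalPath (G : Dgraph) (P : List ℕ) : Prop :=
  G.IsPath P ∧ ∀ Q, G.IsPath Q → (∀ v ∈ P, v ∈ Q) → ∀ v ∈ Q, v ∈ P

end Dgraph

open Dgraph

namespace Aux6

open Dgraph Finset

/-! ### Walks and rank functions -/

lemma transGen_walk (G : Dgraph) {a b : ℕ}
    (h : Relation.TransGen (fun v w => (v, w) ∈ G.A ∧ v ≠ w) a b) :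
    ∃ l : List ℕ, (∀ v ∈ l, v ∈ G.V) ∧ l.Chain' (fun v w => (v, w) ∈ G.A ∧ v ≠ w) ∧
      2 ≤ l.length ∧ l.head? = some a ∧ l.getLast? = some b := by
  induction h with
  | single hrel =>
      rename_i b'
      refine ⟨[a, b'], ?_, ?_, by simp, rfl, rfl⟩
      · intro v hv
        have h1 := (G.A_sub _ hrel.1).1
        have h2 := (G.A_sub _ hrel.1).2
        simp only [List.mem_cons, List.mem_singleton] at hv
        rcases hv with rfl | hv
        · exact h1
        · simp at hv; subst hv; exact h2
      · exact List.isChain_pair.mpr hrel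
  | tail hab hrel ih =>
      rename_i b' c'
      obtain ⟨l, hV, hch, hlen, hhd, hlast⟩ := ih
      refine ⟨l ++ [c'], ?_, ?_, ?_, ?_, ?_⟩
      · intro v hv
        rcases List.mem_append.mp hv with hv | hv
        · exact hV v hv
        · simp at hv; subst hv; exact (G.A_sub _ hrel.1).2
      · refine hch.append (List.isChain_singleton _) ?_
        intro x hx y hy
        simp only [List.head?_cons, Option.mem_def, Option.some.injEq] at hy
        rw [hlast] at hx
        simp only [Option.mem_def, Option.some.injEq] at hx
        subst hx; subst hy; exact hrel
      · simp; omega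
      · have hne : l ≠ [] := by
          intro h0; rw [h0] at hhd; simp at hhd
        rw [List.head?_append_of_ne_nil _ hne]; exact hhd
      · simp
  -- done

lemma memTa_of_rank (G : Dgraph) (r : ℕ → ℕ)
    (hr : ∀ p ∈ G.A, p.1 ≠ p.2 → r p.1 < r p.2) : G.MemTa := by
  rintro ⟨l, hV, hch, hlen, hhl⟩
  have hch' : l.Chain' (fun v w => r v < r w) :=
    hch.imp (fun {v w} h => hr (v, w) h.1 h.2)
  haveI : IsTrans ℕ (fun v w => r v < r w) := ⟨fun _ _ _ => lt_trans⟩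
  replace hch' := List.isChain_iff_pairwise.mp hch'
  match l, hlen, hch', hhl with
  | a :: t, hlen, hch', hhl =>
    have htne : t ≠ [] := by
      intro h0; subst h0; simp at hlen
    have hlast : (a :: t).getLast? = some ((a :: t).getLast (List.cons_ne_nil a t)) :=
      List.getLast?_eq_getLast_of_ne_nil _
    rw [List.head?_cons, hlast] at hhl
    have ha : a = (a :: t).getLast (List.cons_ne_nil a t) := by
      exact Option.some.inj hhl
    have hmem : (a :: t).getLast (List.cons_ne_nil a t) ∈ t := by
      rw [List.getLast_cons htne]
      exact List.getLast_mem htne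
    rw [← ha] at hmem
    rw [List.pairwise_cons] at hch'
    exact lt_irrefl _ (hch'.1 a hmem)

lemma exists_rank (G : Dgraph) (h : G.MemTa) :
    ∃ r : ℕ → ℕ, ∀ p ∈ G.A, p.1 ≠ p.2 → r p.1 < r p.2 := by
  classical
  refine ⟨fun v => (G.V.filter
    (fun u => Relation.TransGen (fun v w => (v, w) ∈ G.A ∧ v ≠ w) u v)).card, ?_⟩
  intro p hp hne
  set Rel : ℕ → ℕ → Prop := fun v w => (v, w) ∈ G.A ∧ v ≠ w with hReldef
  have h1 : p.1 ∈ G.V := (G.A_sub p hp).1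
  have hrel : Rel p.1 p.2 := ⟨hp, hne⟩
  have hnotmem : ¬ Relation.TransGen Rel p.1 p.1 := by
    intro hT
    obtain ⟨l, hV, hch, hlen, hhd, hlast⟩ := transGen_walk G hT
    exact h ⟨l, hV, hch, hlen, hhd.trans hlast.symm⟩
  have hnotin : p.1 ∉ G.V.filter (fun u => Relation.TransGen Rel u p.1) := by
    intro hmem
    exact hnotmem (Finset.mem_filter.mp hmem).2
  have hsub : insert p.1 (G.V.filter fun u => Relation.TransGen Rel u p.1)
      ⊆ G.V.filter (fun u => Relation.TransGen Rel u p.2) := by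
    intro u hu
    rcases Finset.mem_insert.mp hu with rfl | hu
    · exact Finset.mem_filter.mpr ⟨h1, Relation.TransGen.single hrel⟩
    · have hm := Finset.mem_filter.mp hu
      exact Finset.mem_filter.mpr ⟨hm.1, hm.2.tail hrel⟩
  calc (G.V.filter (fun u => Relation.TransGen Rel u p.1)).card
      < (insert p.1 (G.V.filter fun u => Relation.TransGen Rel u p.1)).card := by
        rw [Finset.card_insert_of_notMem hnotin]; omega
    _ ≤ (G.V.filter (fun u => Relation.TransGen Rel u p.2)).card :=
        Finset.card_le_card hsub

/-! ### Hom sets as finsets -/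

noncomputable def homFinset (G H : Dgraph) : Finset (ℕ → ℕ) := by
  classical
  exact ((G.V.pi fun _ => H.V).image fun f x => if hx : x ∈ G.V then f x hx else 0).filter
    (fun f => ∀ p ∈ G.A, (f p.1, f p.2) ∈ H.A)

lemma mem_homFinset {G H : Dgraph} {f : ℕ → ℕ} : f ∈ homFinset G H ↔ f ∈ Hom G H := by
  classical
  simp only [homFinset, Finset.mem_filter, Finset.mem_image, Finset.mem_pi, Hom,
    Set.mem_setOf_eq]
  constructor
  · rintro ⟨⟨g, hg, rfl⟩, harc⟩
    refine ⟨fun v hv => ?_, harc, fun v hv => ?_⟩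
    · simp only [dif_pos hv]; exact hg v hv
    · simp only [dif_neg hv]
  · rintro ⟨hV, harc, hz⟩
    refine ⟨⟨fun x _ => f x, fun x hx => hV x hx, funext fun x => ?_⟩, harc⟩
    by_cases hx : x ∈ G.V
    · simp [hx]
    · simp [hx, hz x hx]

lemma ncard_hom (G H : Dgraph) : (Hom G H).ncard = (homFinset G H).card := by
  rw [← Set.ncard_coe_finset]
  congr 1
  ext f
  simp [mem_homFinset]

lemma restrict_apply (X : Finset ℕ) (f : ℕ → ℕ) (x : ℕ) :
    Dgraph.restrict X f x = if x ∈ X then f x else 0 := rfl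

lemma hom_restrict {L G H : Dgraph} (hsub : L.Subgraph G) {f : ℕ → ℕ}
    (hf : f ∈ Hom G H) : Dgraph.restrict L.V f ∈ Hom L H := by
  obtain ⟨hV, harc, hz⟩ := hf
  refine ⟨fun v hv => ?_, fun p hp => ?_, fun v hv => ?_⟩
  · simp only [restrict_apply]; rw [if_pos hv]; exact hV v (hsub.1 hv)
  · have h1 := (L.A_sub p hp).1
    have h2 := (L.A_sub p hp).2
    simp only [restrict_apply]
    simp only [if_pos h1, if_pos h2]
    exact harc p (hsub.2 hp)
  · simp only [restrict_apply]; rw [if_neg hv]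

lemma mu_restrict_eq {L H : Dgraph} (f : ℕ → ℕ) :
    mu L H (Dgraph.restrict L.V f) = ∑ p ∈ L.Astar, H.iota (f p.1) (f p.2) := by
  refine Finset.sum_congr rfl (fun p hp => ?_)
  have hpA : p ∈ L.A := Finset.mem_of_mem_filter p hp
  have h1 := (L.A_sub p hpA).1
  have h2 := (L.A_sub p hpA).2
  simp only [restrict_apply]
  simp only [if_pos h1, if_pos h2]

lemma iota_pos {G H : Dgraph} (hH : H.IsRefl) {f : ℕ → ℕ} (hf : f ∈ Hom G H)
    {p : ℕ × ℕ} (hp : p ∈ G.A) : 1 ≤ H.iota (f p.1) (f p.2) := by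
  have h1 : f p.1 ∈ H.V := hf.1 _ (G.A_sub p hp).1
  have harc : (f p.1, f p.2) ∈ H.A := hf.2.1 p hp
  have hloop : (f p.1, f p.1) ∈ H.A := hH _ h1
  have : f p.1 ∈ H.interval (f p.1) (f p.2) := by
    rw [Dgraph.interval]
    exact Finset.mem_filter.mpr ⟨h1, hloop, harc⟩
  have := Finset.card_pos.mpr ⟨f p.1, this⟩
  exact this

/-! ### The arc-subdivision gadget -/

section Gadget

variable (G : Dgraph) (B : Finset (ℕ × ℕ)) (hB : B ⊆ G.Astar) (k : ℕ × ℕ → ℕ)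

def encBase : ℕ := G.V.sup id + 1

def enc (p : ℕ × ℕ) (i : ℕ) : ℕ := encBase G + Nat.pair (Nat.pair p.1 p.2) i

lemma enc_not_mem_V (p : ℕ × ℕ) (i : ℕ) : enc G p i ∉ G.V := by
  intro h
  have h1 : id (enc G p i) ≤ G.V.sup id := Finset.le_sup h
  simp only [id] at h1
  unfold enc encBase at h1
  omega

lemma enc_inj {p q : ℕ × ℕ} {i j : ℕ} (h : enc G p i = enc G q j) : p = q ∧ i = j := by
  unfold enc at h
  have h2 : Nat.pair (Nat.pair p.1 p.2) i = Nat.pair (Nat.pair q.1 q.2) j := by omega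
  rw [Nat.pair_eq_pair] at h2
  obtain ⟨h3, h4⟩ := h2
  rw [Nat.pair_eq_pair] at h3
  exact ⟨Prod.ext h3.1 h3.2, h4⟩

def dec1 (z : ℕ) : ℕ := (Nat.unpair (Nat.unpair (z - encBase G)).1).1
def dec2 (z : ℕ) : ℕ := (Nat.unpair (Nat.unpair (z - encBase G)).1).2

lemma dec1_enc (p : ℕ × ℕ) (i : ℕ) : dec1 G (enc G p i) = p.1 := by
  unfold dec1 enc
  rw [Nat.add_sub_cancel_left, Nat.unpair_pair, Nat.unpair_pair]

lemma dec2_enc (p : ℕ × ℕ) (i : ℕ) : dec2 G (enc G p i) = p.2 := by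
  unfold dec2 enc
  rw [Nat.add_sub_cancel_left, Nat.unpair_pair, Nat.unpair_pair]

def MBset : Finset ℕ := B.biUnion fun p => (Finset.range (k p)).image (enc G p)

lemma mem_MBset {z : ℕ} :
    z ∈ MBset G B k ↔ ∃ p ∈ B, ∃ i < k p, z = enc G p i := by
  simp only [MBset, Finset.mem_biUnion, Finset.mem_image, Finset.mem_range]
  constructor
  · rintro ⟨p, hp, i, hi, rfl⟩; exact ⟨p, hp, i, hi, rfl⟩
  · rintro ⟨p, hp, i, hi, rfl⟩; exact ⟨p, hp, i, hi, rfl⟩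

def gadget : Dgraph where
  V := G.V ∪ MBset G B k
  nonempty := G.nonempty.mono Finset.subset_union_left
  A := G.A ∪ B.biUnion (fun p =>
    ((Finset.range (k p)).image fun i => (p.1, enc G p i)) ∪
    ((Finset.range (k p)).image fun i => (enc G p i, p.2)))
  A_sub := by
    intro q hq
    rcases Finset.mem_union.mp hq with h | h
    · exact ⟨Finset.mem_union_left _ (G.A_sub q h).1,
        Finset.mem_union_left _ (G.A_sub q h).2⟩
    · obtain ⟨p, hp, hq2⟩ := Finset.mem_biUnion.mp h
      have hpA : p ∈ G.A := Finset.mem_of_mem_filter p (hB hp)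
      have henc : ∀ i < k p, enc G p i ∈ MBset G B k := fun i hi =>
        (mem_MBset G B k).mpr ⟨p, hp, i, hi, rfl⟩
      rcases Finset.mem_union.mp hq2 with h2 | h2 <;>
        obtain ⟨i, hi, rfl⟩ := Finset.mem_image.mp h2
      · rw [Finset.mem_range] at hi
        exact ⟨Finset.mem_union_left _ (G.A_sub p hpA).1,
          Finset.mem_union_right _ (henc i hi)⟩
      · rw [Finset.mem_range] at hi
        exact ⟨Finset.mem_union_right _ (henc i hi),
          Finset.mem_union_left _ (G.A_sub p hpA).2⟩

lemma gadget_memTa (hG : G.MemTa) : (gadget G B hB k).MemTa := by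
  obtain ⟨r, hr⟩ := exists_rank G hG
  apply memTa_of_rank _
    (fun x => if x ∈ G.V then 2 * r x else 2 * r (dec1 G x) + 1)
  intro q hq hne
  rcases Finset.mem_union.mp hq with h | h
  · have h1 := (G.A_sub q h).1
    have h2 := (G.A_sub q h).2
    simp only [if_pos h1, if_pos h2]
    have := hr q h hne
    omega
  · obtain ⟨p, hp, hq2⟩ := Finset.mem_biUnion.mp h
    have hpstar := Finset.mem_filter.mp (hB hp)
    have hpA : p ∈ G.A := hpstar.1
    have hr12 : r p.1 < r p.2 := hr p hpA hpstar.2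
    have h1 := (G.A_sub p hpA).1
    have h2 := (G.A_sub p hpA).2
    rcases Finset.mem_union.mp hq2 with h2' | h2' <;>
      obtain ⟨i, _, rfl⟩ := Finset.mem_image.mp h2'
    · simp only [if_pos h1, if_neg (enc_not_mem_V G p i), dec1_enc]
      omega
    · simp only [if_pos h2, if_neg (enc_not_mem_V G p i), dec1_enc]
      omega

lemma mem_gadget_A {q : ℕ × ℕ} :
    q ∈ (gadget G B hB k).A ↔ q ∈ G.A ∨
      ∃ p ∈ B, ∃ i < k p, q = (p.1, enc G p i) ∨ q = (enc G p i, p.2) := by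
  show q ∈ G.A ∪ _ ↔ _
  simp only [Finset.mem_union, Finset.mem_biUnion, Finset.mem_image, Finset.mem_range]
  constructor
  · rintro (h | ⟨p, hp, h⟩)
    · exact Or.inl h
    · rcases h with ⟨i, hi, rfl⟩ | ⟨i, hi, rfl⟩
      · exact Or.inr ⟨p, hp, i, hi, Or.inl rfl⟩
      · exact Or.inr ⟨p, hp, i, hi, Or.inr rfl⟩
  · rintro (h | ⟨p, hp, i, hi, rfl | rfl⟩)
    · exact Or.inl h
    · exact Or.inr ⟨p, hp, Or.inl ⟨i, hi, rfl⟩⟩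
    · exact Or.inr ⟨p, hp, Or.inr ⟨i, hi, rfl⟩⟩

lemma gadget_card (H : Dgraph) :
    (homFinset (gadget G B hB k) H).card
      = ∑ ζ ∈ homFinset G H, ∏ p ∈ B, (H.iota (ζ p.1) (ζ p.2)) ^ (k p) := by
  classical
  have hGsubV : G.V ⊆ (gadget G B hB k).V := Finset.subset_union_left
  have hMBsubV : MBset G B k ⊆ (gadget G B hB k).V := Finset.subset_union_right
  have hGsubA : G.A ⊆ (gadget G B hB k).A := Finset.subset_union_left
  have hVchar : ∀ x, x ∈ (gadget G B hB k).V ↔ x ∈ G.V ∨ x ∈ MBset G B k := by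
    intro x; exact Finset.mem_union
  -- the fiber map
  have hmap : ∀ f ∈ homFinset (gadget G B hB k) H, Dgraph.restrict G.V f ∈ homFinset G H := by
    intro f hf
    rw [mem_homFinset] at hf ⊢
    obtain ⟨hV, harc, hz⟩ := hf
    refine ⟨fun v hv => ?_, fun p hp => ?_, fun v hv => ?_⟩
    · simp only [restrict_apply]; rw [if_pos hv]; exact hV v (hGsubV hv)
    · have h1 := (G.A_sub p hp).1
      have h2 := (G.A_sub p hp).2
      simp only [restrict_apply]; simp only [if_pos h1, if_pos h2]
      exact harc p (hGsubA hp)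
    · simp only [restrict_apply]; rw [if_neg hv]
  rw [Finset.card_eq_sum_card_fiberwise hmap]
  refine Finset.sum_congr rfl (fun ζ hζ => ?_)
  have hζHom : ζ ∈ Hom G H := mem_homFinset.mp hζ
  -- count the fiber over ζ
  have hfib : ((homFinset (gadget G B hB k) H).filter
        (fun f => Dgraph.restrict G.V f = ζ)).card
      = ((MBset G B k).pi (fun z => H.interval (ζ (dec1 G z)) (ζ (dec2 G z)))).card := by
    refine Finset.card_bij' (fun f _ => fun z _ => f z)
      (fun g _ => fun x => if x ∈ G.V then ζ x else if hz : x ∈ MBset G B k then g x hz else 0)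
      ?_ ?_ ?_ ?_
    · -- image of fiber lands in pi
      intro f hf
      rw [Finset.mem_filter] at hf
      obtain ⟨hfhom, hres⟩ := hf
      rw [mem_homFinset] at hfhom
      obtain ⟨hV, harc, hz⟩ := hfhom
      rw [Finset.mem_pi]
      intro z hz2
      beta_reduce
      obtain ⟨p, hp, i, hi, rfl⟩ := (mem_MBset G B k).mp hz2
      rw [dec1_enc, dec2_enc]
      have h1 : p.1 ∈ G.V := (G.A_sub p (Finset.mem_of_mem_filter p (hB hp))).1
      have h2 : p.2 ∈ G.V := (G.A_sub p (Finset.mem_of_mem_filter p (hB hp))).2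
      have hfz : f (enc G p i) ∈ H.V := hV _ (hMBsubV hz2)
      have hres1 : f p.1 = ζ p.1 := by
        rw [← hres]; simp only [restrict_apply]; rw [if_pos h1]
      have hres2 : f p.2 = ζ p.2 := by
        rw [← hres]; simp only [restrict_apply]; rw [if_pos h2]
      have ha1 : (p.1, enc G p i) ∈ (gadget G B hB k).A :=
        (mem_gadget_A G B hB k).mpr (Or.inr ⟨p, hp, i, hi, Or.inl rfl⟩)
      have ha2 : (enc G p i, p.2) ∈ (gadget G B hB k).A :=
        (mem_gadget_A G B hB k).mpr (Or.inr ⟨p, hp, i, hi, Or.inr rfl⟩)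
      have harc1 := harc _ ha1
      have harc2 := harc _ ha2
      simp only at harc1 harc2
      rw [hres1] at harc1
      rw [hres2] at harc2
      show f (enc G p i) ∈ Finset.filter _ H.V
      exact Finset.mem_filter.mpr ⟨hfz, harc1, harc2⟩
    · -- extension lands in fiber
      intro g hg
      rw [Finset.mem_pi] at hg
      rw [Finset.mem_filter]
      constructor
      · rw [mem_homFinset]
        refine ⟨fun v hv => ?_, fun q hq => ?_, fun v hv => ?_⟩
        · beta_reduce
          rcases (hVchar v).mp hv with h | h
          · rw [if_pos h]; exact hζHom.1 v h
          · have hvn : v ∉ G.V := by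
              obtain ⟨p, hp, i, hi, rfl⟩ := (mem_MBset G B k).mp h
              exact enc_not_mem_V G p i
            rw [if_neg hvn, dif_pos h]
            have h5 := hg v h
            rw [Dgraph.interval] at h5
            exact Finset.mem_of_mem_filter _ h5
        · beta_reduce
          rcases (mem_gadget_A G B hB k).mp hq with h | ⟨p, hp, i, hi, rfl | rfl⟩
          · have h1 := (G.A_sub q h).1
            have h2 := (G.A_sub q h).2
            simp only [if_pos h1, if_pos h2]
            exact hζHom.2.1 q h
          all_goals {
            have h1 : p.1 ∈ G.V := (G.A_sub p (Finset.mem_of_mem_filter p (hB hp))).1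
            have h2 : p.2 ∈ G.V := (G.A_sub p (Finset.mem_of_mem_filter p (hB hp))).2
            have hzmem : enc G p i ∈ MBset G B k := (mem_MBset G B k).mpr ⟨p, hp, i, hi, rfl⟩
            have hzn : enc G p i ∉ G.V := enc_not_mem_V G p i
            have hint := hg _ hzmem
            rw [Dgraph.interval] at hint
            rw [Finset.mem_filter] at hint
            rw [dec1_enc, dec2_enc] at hint
            simp only [if_pos h1, if_pos h2, if_neg hzn, dif_pos hzmem]
            first
            | exact hint.2.1
            | exact hint.2.2
          }
        · beta_reduce
          rw [hVchar] at hv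
          push_neg at hv
          rw [if_neg hv.1, dif_neg hv.2]
      · -- restriction is ζ
        funext x
        beta_reduce
        by_cases hx : x ∈ G.V
        · simp only [restrict_apply]; rw [if_pos hx, if_pos hx]
        · simp only [restrict_apply]; rw [if_neg hx]
          exact (hζHom.2.2 x hx).symm
    · -- left inverse
      intro f hf
      rw [Finset.mem_filter] at hf
      obtain ⟨hfhom, hres⟩ := hf
      rw [mem_homFinset] at hfhom
      funext x
      beta_reduce
      by_cases hx : x ∈ G.V
      · rw [if_pos hx, ← hres]; simp only [restrict_apply]; rw [if_pos hx]
      · rw [if_neg hx]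
        by_cases hx2 : x ∈ MBset G B k
        · rw [dif_pos hx2]
        · rw [dif_neg hx2]
          refine (hfhom.2.2 x ?_).symm
          rw [hVchar]; push_neg; exact ⟨hx, hx2⟩
    · -- right inverse
      intro g hg
      funext z
      funext hz
      beta_reduce
      have hzn : z ∉ G.V := by
        obtain ⟨p, hp, i, hi, rfl⟩ := (mem_MBset G B k).mp hz
        exact enc_not_mem_V G p i
      simp only [if_neg hzn, dif_pos hz]
  rw [hfib, Finset.card_pi]
  -- now compute the product over midpoints
  unfold MBset
  rw [Finset.prod_biUnion]
  · refine Finset.prod_congr rfl (fun p hp => ?_)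
    rw [Finset.prod_image]
    · rw [← Finset.card_range (k p)]
      rw [Finset.prod_congr rfl (fun i _ => ?_), Finset.prod_const]
      · rw [Finset.card_range]
      · rw [dec1_enc, dec2_enc]
        rfl
    · intro i _ j _ hij
      exact (enc_inj G hij).2
  · intro p hp q hq hpq
    rw [Function.onFun]
    rw [Finset.disjoint_left]
    intro z hz1 hz2
    simp only [Finset.mem_image, Finset.mem_range, Finset.mem_coe] at hz1 hz2
    obtain ⟨i, _, rfl⟩ := hz1
    obtain ⟨j, _, hz⟩ := hz2
    exact hpq (enc_inj G hz.symm).1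

end Gadget

end Aux6


namespace Aux6

open Finset Pointwise

lemma pow_contra {P A : ℕ} (hP : 1 ≤ P) (h : ∀ m : ℕ, P ^ m ≤ A * (P - 1) ^ m) : False := by
  rcases Nat.lt_or_ge P 2 with h2 | h2
  · have hP1 : P = 1 := by omega
    subst hP1
    have := h 1
    simp at this
  · set Q := P - 1 with hQ
    have hQ1 : 1 ≤ Q := by omega
    have hQP : (Q:ℝ) < (P:ℝ) := by exact_mod_cast (by omega : Q < P)
    have hQpos : (0:ℝ) < Q := by exact_mod_cast hQ1
    have hone : 1 < (P:ℝ)/(Q:ℝ) := (one_lt_div hQpos).mpr hQP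
    obtain ⟨m, hm⟩ := pow_unbounded_of_one_lt (A:ℝ) hone
    have hh := h m
    have hhr : (P:ℝ)^m ≤ (A:ℝ) * (Q:ℝ)^m := by exact_mod_cast hh
    have hlt : (A:ℝ) * (Q:ℝ)^m < ((P:ℝ)/(Q:ℝ))^m * (Q:ℝ)^m :=
      mul_lt_mul_of_pos_right hm (pow_pos hQpos m)
    rw [div_pow, div_mul_cancel₀] at hlt
    · linarith
    · exact pow_ne_zero _ (ne_of_gt hQpos)

lemma exists_exponents (B : Finset (ℕ × ℕ)) (c : ℕ × ℕ → ℕ) (D : Finset ((ℕ × ℕ) → ℕ))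
    (𝓕 : Set (Finset (ℕ × ℕ)))
    (hcov : ∀ p ∈ B, ∃ F ∈ 𝓕, p ∈ F ∧ F ⊆ B)
    (hc : ∀ p ∈ B, 1 ≤ c p)
    (hD1 : ∀ d ∈ D, ∀ p ∈ B, 1 ≤ d p)
    (hsum : ∀ d ∈ D, ∀ F ∈ 𝓕, F ⊆ B → ∑ p ∈ F, d p ≤ ∑ p ∈ F, c p)
    (hne : ∀ d ∈ D, ∃ p ∈ B, d p ≠ c p) :
    ∃ k : ℕ × ℕ → ℕ, ∀ d ∈ D, ∏ p ∈ B, (d p) ^ (k p) < ∏ p ∈ B, (c p) ^ (k p) := by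
  classical
  rcases D.eq_empty_or_nonempty with rfl | hDne
  · exact ⟨fun _ => 0, by simp⟩
  obtain ⟨d0, hd0⟩ := hDne
  set ι := {p : ℕ × ℕ // p ∈ B} with hι
  let lg : ((ℕ × ℕ) → ℕ) → (ι → ℝ) := fun d i => Real.log (d i.1)
  set y : ι → ℝ := lg c with hy
  set t : Finset (ι → ℝ) := D.image lg with ht
  set neg : Set (ι → ℝ) := {z | ∀ i, z i ≤ 0} with hnegdef
  set s : Set (ι → ℝ) := convexHull ℝ (↑t : Set (ι → ℝ)) + neg with hs
  have sumFF : ∀ (F : Finset (ℕ × ℕ)), F ⊆ B → ∀ (φ : ℕ × ℕ → ℝ),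
      ∑ i ∈ Finset.univ.filter (fun i : ι => i.1 ∈ F), φ i.1 = ∑ p ∈ F, φ p := by
    intro F hFB φ
    rw [Finset.sum_filter, Finset.univ_eq_attach,
      Finset.sum_attach B (fun p => if p ∈ F then φ p else 0), ← Finset.sum_filter,
      Finset.filter_mem_eq_inter, Finset.inter_eq_right.mpr hFB]
  have hcpos : ∀ i : ι, (0:ℝ) < (c i.1 : ℝ) := by
    intro i
    exact_mod_cast Nat.lt_of_lt_of_le Nat.zero_lt_one (hc i.1 i.2)
  have hdpos : ∀ d ∈ D, ∀ i : ι, (0:ℝ) < (d i.1 : ℝ) := by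
    intro d hd i
    exact_mod_cast Nat.lt_of_lt_of_le Nat.zero_lt_one (hD1 d hd i.1 i.2)
  have hexplg : ∀ d ∈ D, ∀ i : ι, Real.exp (lg d i) = (d i.1 : ℝ) := by
    intro d hd i
    exact Real.exp_log (hdpos d hd i)
  -- `y` avoids the downward closure of the convex hull of `t`
  have hys : y ∉ s := by
    intro hmem
    rw [hs, Set.mem_add] at hmem
    obtain ⟨x, hx, z, hz, hxz⟩ := hmem
    rw [Finset.convexHull_eq] at hx
    obtain ⟨w, hw0, hw1, hwx⟩ := hx
    rw [Finset.centerMass_eq_of_sum_1 _ _ hw1] at hwx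
    simp only [id_eq] at hwx
    have hpt : ∀ i : ι, Real.log (c i.1) ≤ ∑ e ∈ t, w e * e i := by
      intro i
      have h1 : x i + z i = y i := by rw [← hxz]; rfl
      have h2 : z i ≤ 0 := hz i
      have h3 : x i = ∑ e ∈ t, w e * e i := by
        rw [← hwx, Finset.sum_apply]
        exact Finset.sum_congr rfl (fun e _ => by simp [smul_eq_mul])
      have h4 : y i ≤ x i := by linarith
      rw [← h3]
      exact h4
    set supp : Finset (ι → ℝ) := t.filter (fun e => 0 < w e) with hsuppdef
    have hsuppsub : supp ⊆ t := Finset.filter_subset _ _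
    have hw1' : ∑ e ∈ supp, w e = 1 := by
      rw [← hw1]
      refine Finset.sum_subset hsuppsub ?_
      intro e he hnot
      rw [hsuppdef, Finset.mem_filter] at hnot
      push_neg at hnot
      exact le_antisymm (hnot he) (hw0 e he)
    have hptsupp : ∀ i : ι, Real.log (c i.1) ≤ ∑ e ∈ supp, w e * e i := by
      intro i
      have : ∑ e ∈ supp, w e * e i = ∑ e ∈ t, w e * e i := by
        refine Finset.sum_subset hsuppsub ?_
        intro e he hnot
        rw [hsuppdef, Finset.mem_filter] at hnot
        push_neg at hnot
        rw [le_antisymm (hnot he) (hw0 e he)]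
        ring
      rw [this]
      exact hpt i
    have hsuppne : supp.Nonempty := by
      rw [Finset.nonempty_iff_ne_empty]
      intro h0
      rw [h0, Finset.sum_empty] at hw1'
      norm_num at hw1'
    have hwpos : ∀ e ∈ supp, 0 < w e := fun e he => (Finset.mem_filter.mp he).2
    -- two cases according to whether the support is "one-dimensional"
    by_cases hconst : ∀ i : ι, ∀ e1 ∈ supp, ∀ e2 ∈ supp, e1 i = e2 i
    · obtain ⟨e0, he0⟩ := hsuppne
      obtain ⟨d0', hd0', hlg0⟩ := Finset.mem_image.mp (hsuppsub he0)
      have he0i : ∀ i : ι, ∑ e ∈ supp, w e * e i = e0 i := by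
        intro i
        calc ∑ e ∈ supp, w e * e i = ∑ e ∈ supp, w e * e0 i :=
              Finset.sum_congr rfl (fun e he => by rw [hconst i e he e0 he0])
          _ = (∑ e ∈ supp, w e) * e0 i := by rw [Finset.sum_mul]
          _ = e0 i := by rw [hw1', one_mul]
      have hle : ∀ p : ℕ × ℕ, ∀ hp : p ∈ B, c p ≤ d0' p := by
        intro p hp
        have h1 := hptsupp ⟨p, hp⟩
        rw [he0i, ← hlg0] at h1
        have h2 : Real.log (c p) ≤ Real.log (d0' p) := h1
        rw [Real.log_le_log_iff (hcpos ⟨p, hp⟩) (hdpos d0' hd0' ⟨p, hp⟩)] at h2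
        exact_mod_cast h2
      obtain ⟨p0, hp0B, hp0ne⟩ := hne d0' hd0'
      obtain ⟨F, hF, hp0F, hFB⟩ := hcov p0 hp0B
      have h1 : ∑ p ∈ F, c p < ∑ p ∈ F, d0' p := by
        refine Finset.sum_lt_sum (fun p hp => hle p (hFB hp)) ⟨p0, hp0F, ?_⟩
        exact lt_of_le_of_ne (hle p0 hp0B) (Ne.symm hp0ne)
      exact absurd (hsum d0' hd0' F hF hFB) (by omega)
    · push_neg at hconst
      obtain ⟨i0, e1, he1, e2, he2, hne12⟩ := hconst
      have hkey : Real.exp (∑ e ∈ supp, w e * e i0) < ∑ e ∈ supp, w e * Real.exp (e i0) := by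
        have := strictConvexOn_exp.map_sum_lt (t := supp) (w := w) (p := fun e => e i0)
          hwpos hw1' (fun e _ => Set.mem_univ _) ⟨e1, he1, e2, he2, hne12⟩
        simpa [smul_eq_mul] using this
      have hjen : ∀ i : ι, Real.exp (∑ e ∈ supp, w e * e i)
          ≤ ∑ e ∈ supp, w e * Real.exp (e i) := by
        intro i
        have := convexOn_exp.map_sum_le (t := supp) (w := w) (p := fun e => e i)
          (fun e he => (hwpos e he).le) hw1' (fun e _ => Set.mem_univ _)
        simpa [smul_eq_mul] using this
      have hcle : ∀ i : ι, (c i.1 : ℝ) ≤ ∑ e ∈ supp, w e * Real.exp (e i) := by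
        intro i
        calc (c i.1 : ℝ) = Real.exp (Real.log (c i.1)) := (Real.exp_log (hcpos i)).symm
          _ ≤ Real.exp (∑ e ∈ supp, w e * e i) := Real.exp_le_exp.mpr (hptsupp i)
          _ ≤ _ := hjen i
      have hclt : (c i0.1 : ℝ) < ∑ e ∈ supp, w e * Real.exp (e i0) := by
        calc (c i0.1 : ℝ) = Real.exp (Real.log (c i0.1)) := (Real.exp_log (hcpos i0)).symm
          _ ≤ Real.exp (∑ e ∈ supp, w e * e i0) := Real.exp_le_exp.mpr (hptsupp i0)
          _ < _ := hkey
      obtain ⟨F, hF, hi0F, hFB⟩ := hcov i0.1 i0.2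
      have hi0FF : i0 ∈ Finset.univ.filter (fun i : ι => i.1 ∈ F) :=
        Finset.mem_filter.mpr ⟨Finset.mem_univ _, hi0F⟩
      have hlt : ∑ i ∈ Finset.univ.filter (fun i : ι => i.1 ∈ F), (c i.1 : ℝ)
          < ∑ i ∈ Finset.univ.filter (fun i : ι => i.1 ∈ F), ∑ e ∈ supp, w e * Real.exp (e i) :=
        Finset.sum_lt_sum (fun i _ => hcle i) ⟨i0, hi0FF, hclt⟩
      have hlhs : ∑ i ∈ Finset.univ.filter (fun i : ι => i.1 ∈ F), (c i.1 : ℝ)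
          = ∑ p ∈ F, (c p : ℝ) := sumFF F hFB (fun p => ((c p : ℕ) : ℝ))
      have hrhs : ∑ i ∈ Finset.univ.filter (fun i : ι => i.1 ∈ F), ∑ e ∈ supp, w e * Real.exp (e i)
          ≤ ∑ p ∈ F, (c p : ℝ) := by
        rw [Finset.sum_comm]
        have hinner : ∀ e ∈ supp, ∑ i ∈ Finset.univ.filter (fun i : ι => i.1 ∈ F),
            w e * Real.exp (e i) ≤ w e * ∑ p ∈ F, (c p : ℝ) := by
          intro e he
          rw [← Finset.mul_sum]
          refine mul_le_mul_of_nonneg_left ?_ (hwpos e he).le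
          obtain ⟨d, hd, rfl⟩ := Finset.mem_image.mp (hsuppsub he)
          have h1 : ∑ i ∈ Finset.univ.filter (fun i : ι => i.1 ∈ F), Real.exp (lg d i)
              = ∑ p ∈ F, (d p : ℝ) := by
            rw [Finset.sum_congr rfl (fun i _ => hexplg d hd i)]
            exact sumFF F hFB (fun p => ((d p : ℕ) : ℝ))
          rw [h1]
          have h2 : ∑ p ∈ F, d p ≤ ∑ p ∈ F, c p := hsum d hd F hF hFB
          exact_mod_cast h2
        calc ∑ e ∈ supp, ∑ i ∈ Finset.univ.filter (fun i : ι => i.1 ∈ F), w e * Real.exp (e i)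
            ≤ ∑ e ∈ supp, w e * ∑ p ∈ F, (c p : ℝ) := Finset.sum_le_sum hinner
          _ = (∑ e ∈ supp, w e) * ∑ p ∈ F, (c p : ℝ) := by rw [Finset.sum_mul]
          _ = ∑ p ∈ F, (c p : ℝ) := by rw [hw1', one_mul]
      rw [hlhs] at hlt
      linarith
  -- separating functional
  have hnegconv : Convex ℝ neg := by
    intro x hx z hz a b ha hb hab
    intro i
    have h1 : a * x i ≤ 0 := mul_nonpos_of_nonneg_of_nonpos ha (hx i)
    have h2 : b * z i ≤ 0 := mul_nonpos_of_nonneg_of_nonpos hb (hz i)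
    simpa [smul_eq_mul] using add_nonpos h1 h2
  have hnegclosed : IsClosed neg := by
    have : neg = ⋂ i : ι, {z : ι → ℝ | z i ≤ 0} := by
      ext z
      simp [hnegdef, Set.mem_iInter]
    rw [this]
    exact isClosed_iInter (fun i => isClosed_le (continuous_apply i) continuous_const)
  have hconv : Convex ℝ s := ((convex_convexHull ℝ (↑t : Set (ι → ℝ))).add hnegconv)
  have hcompact : IsCompact (convexHull ℝ (↑t : Set (ι → ℝ))) :=
    t.finite_toSet.isCompact_convexHull ℝ
  have hclosed : IsClosed s := hnegclosed.add_left_of_isCompact hcompact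
  obtain ⟨f, u, hfs, hfy⟩ := geometric_hahn_banach_closed_point hconv hclosed hys
  have hzeroneg : (0 : ι → ℝ) ∈ neg := fun i => le_refl 0
  have hts : ∀ e ∈ t, e ∈ s := by
    intro e he
    have h1 : e ∈ convexHull ℝ (↑t : Set (ι → ℝ)) :=
      subset_convexHull ℝ _ (Finset.mem_coe.mpr he)
    have := Set.add_mem_add h1 hzeroneg
    rwa [add_zero] at this
  set bv : ι → (ι → ℝ) := fun i => fun j => if i = j then (1:ℝ) else 0 with hbv
  set k0 : ι → ℝ := fun i => f (bv i) with hk0def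
  have hflin : ∀ x : ι → ℝ, f x = ∑ i : ι, x i * k0 i := by
    intro x
    conv_lhs => rw [pi_eq_sum_univ x, map_sum]
    exact Finset.sum_congr rfl (fun i _ => by rw [map_smul, smul_eq_mul, hk0def])
  have hk0 : ∀ i, 0 ≤ k0 i := by
    intro i
    by_contra hneg0
    push_neg at hneg0
    set e0 : ι → ℝ := lg d0 with he0def
    have he0s : e0 ∈ s := hts _ (Finset.mem_image_of_mem lg hd0)
    have hfe0 : f e0 < u := hfs _ he0s
    set T : ℝ := (u - f e0 + 1) / (-k0 i) with hT
    have hTpos : 0 ≤ T := div_nonneg (by linarith) (by linarith)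
    have hzmem : (-T) • bv i ∈ neg := by
      intro j
      simp only [Pi.smul_apply, smul_eq_mul, hbv]
      split_ifs
      · linarith
      · simp
    have hmem2 : e0 + (-T) • bv i ∈ s := by
      refine Set.add_mem_add ?_ hzmem
      exact subset_convexHull ℝ _ (Finset.mem_coe.mpr (Finset.mem_image_of_mem lg hd0))
    have hfval : f (e0 + (-T) • bv i) = f e0 - T * k0 i := by
      rw [map_add, map_smul, smul_eq_mul]
      have hkk : k0 i = f (bv i) := rfl
      rw [hkk]
      ring
    have hTk : T * (-k0 i) = u - f e0 + 1 := div_mul_cancel₀ _ (by linarith)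
    have hlt := hfs _ hmem2
    rw [hfval] at hlt
    have : T * (-k0 i) = -(T * k0 i) := by ring
    linarith [hTk, hlt]
  set ε : ℝ := f y - u with hε
  have hεpos : 0 < ε := by simp only [hε]; linarith
  have hgap : ∀ d ∈ D, ε < ∑ i : ι, (y i - lg d i) * k0 i := by
    intro d hd
    have h1 : f (lg d) < u := hfs _ (hts _ (Finset.mem_image_of_mem lg hd))
    have h2 : ∑ i : ι, (y i - lg d i) * k0 i = f y - f (lg d) := by
      rw [hflin y, hflin (lg d), ← Finset.sum_sub_distrib]
      exact Finset.sum_congr rfl (fun i _ => by ring)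
    rw [h2]
    simp only [hε]
    linarith
  set C : ℝ := ∑ d ∈ D, ∑ i : ι, |y i - lg d i| with hC
  have hCd : ∀ d ∈ D, ∑ i : ι, |y i - lg d i| ≤ C := by
    intro d hd
    refine Finset.single_le_sum (f := fun d' => ∑ i : ι, |y i - lg d' i|)
      (fun d' _ => Finset.sum_nonneg (fun i _ => abs_nonneg _)) hd
  have hC0 : 0 ≤ C := le_trans (Finset.sum_nonneg (fun i _ => abs_nonneg _)) (hCd d0 hd0)
  obtain ⟨n, hn⟩ := exists_nat_gt (C / ε)
  have hnC : C < n * ε := by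
    rw [div_lt_iff₀ hεpos] at hn
    linarith
  refine ⟨fun p => if hp : p ∈ B then ⌈(n : ℝ) * k0 ⟨p, hp⟩⌉₊ else 0, ?_⟩
  intro d hd
  set k : ℕ × ℕ → ℕ := fun p => if hp : p ∈ B then ⌈(n : ℝ) * k0 ⟨p, hp⟩⌉₊ else 0 with hkdef
  show ∏ p ∈ B, (d p) ^ (k p) < ∏ p ∈ B, (c p) ^ (k p)
  rw [← Nat.cast_lt (α := ℝ)]
  push_cast
  have hprodform : ∀ (g : ℕ × ℕ → ℕ), (∀ i : ι, (0:ℝ) < (g i.1 : ℝ)) →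
      ∏ p ∈ B, ((g p : ℝ)) ^ (k p)
        = Real.exp (∑ i : ι, (k i.1 : ℝ) * Real.log (g i.1)) := by
    intro g hg
    rw [Real.exp_sum, Finset.univ_eq_attach,
      Finset.prod_attach B (fun p => Real.exp ((k p : ℝ) * Real.log (g p)))]
    refine Finset.prod_congr rfl (fun p hp => ?_)
    calc ((g p : ℝ)) ^ (k p) = Real.exp (Real.log (((g p : ℝ)) ^ (k p))) :=
          (Real.exp_log (pow_pos (hg ⟨p, hp⟩) _)).symm
      _ = Real.exp ((k p : ℝ) * Real.log (g p)) := by rw [Real.log_pow]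
  rw [hprodform d (hdpos d hd), hprodform c hcpos]
  rw [Real.exp_lt_exp]
  have hkval : ∀ i : ι, (k i.1 : ℝ) = (⌈(n : ℝ) * k0 i⌉₊ : ℝ) := by
    intro i
    simp only [hkdef, dif_pos i.2]; rfl
  have hdiff : ∑ i : ι, (k i.1 : ℝ) * Real.log (c i.1) - ∑ i : ι, (k i.1 : ℝ) * Real.log (d i.1)
      = ∑ i : ι, (k i.1 : ℝ) * (y i - lg d i) := by
    rw [← Finset.sum_sub_distrib]
    exact Finset.sum_congr rfl (fun i _ => by simp only [hy]; ring)
  have hterm : ∀ i : ι, (n:ℝ) * k0 i * (y i - lg d i) - |y i - lg d i|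
      ≤ (k i.1 : ℝ) * (y i - lg d i) := by
    intro i
    rw [hkval i]
    set a : ℝ := (n:ℝ) * k0 i with ha
    have ha0 : 0 ≤ a := mul_nonneg (Nat.cast_nonneg n) (hk0 i)
    set b : ℝ := y i - lg d i with hb
    have h1 : a ≤ (⌈a⌉₊ : ℝ) := Nat.le_ceil a
    have h2 : (⌈a⌉₊ : ℝ) < a + 1 := Nat.ceil_lt_add_one ha0
    rcases le_or_gt 0 b with hb0 | hb0
    · nlinarith [abs_nonneg b]
    · rw [abs_of_neg hb0]
      nlinarith
  have hsum1 : ∑ i : ι, ((n:ℝ) * k0 i * (y i - lg d i) - |y i - lg d i|)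
      ≤ ∑ i : ι, (k i.1 : ℝ) * (y i - lg d i) :=
    Finset.sum_le_sum (fun i _ => hterm i)
  have hsum2 : ∑ i : ι, ((n:ℝ) * k0 i * (y i - lg d i) - |y i - lg d i|)
      = (n:ℝ) * (∑ i : ι, (y i - lg d i) * k0 i) - ∑ i : ι, |y i - lg d i| := by
    rw [Finset.sum_sub_distrib, Finset.mul_sum]
    congr 1
    exact Finset.sum_congr rfl (fun i _ => by ring)
  have hfinal : 0 < ∑ i : ι, (k i.1 : ℝ) * (y i - lg d i) := by
    have hg := hgap d hd
    have hCg := hCd d hd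
    have hn1 : (n:ℝ) * ε ≤ (n:ℝ) * (∑ i : ι, (y i - lg d i) * k0 i) :=
      mul_le_mul_of_nonneg_left (hg.le) (Nat.cast_nonneg n)
    calc (0:ℝ) < (n:ℝ) * ε - C := by linarith
      _ ≤ (n:ℝ) * (∑ i : ι, (y i - lg d i) * k0 i) - ∑ i : ι, |y i - lg d i| := by
          have := hCd d hd
          linarith
      _ = ∑ i : ι, ((n:ℝ) * k0 i * (y i - lg d i) - |y i - lg d i|) := hsum2.symm
      _ ≤ _ := hsum1
  linarith [hdiff, hfinal]

end Aux6


theorem stmt_6 (R S : Dgraph) (hRt : R.MemTa) (hRr : R.IsRefl) (hSr : S.IsRefl)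
    (hHom : ∀ G' : Dgraph, G'.MemTa → (Hom G' R).ncard ≤ (Hom G' S).ncard)
    (G : Dgraph) (hGt : G.MemTa) (𝓛 : Set Dgraph) (h𝓛 : ∀ L ∈ 𝓛, Subgraph L G)
    (ξ : ℕ → ℕ) (hξ : ξ ∈ MLSet G R 𝓛)
    (hI : ∃ ζ ∈ MLSet G S 𝓛, ∀ L ∈ 𝓛, ∀ p ∈ L.Astar,
      S.iota (ζ p.1) (ζ p.2) = R.iota (ξ p.1) (ξ p.2)) :
    (JSet G R R 𝓛 ξ).ncard ≤ (JSet G R S 𝓛 ξ).ncard := by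
  classical
  obtain ⟨ζ₀, hζ₀M, hζ₀I⟩ := hI
  set c : ℕ × ℕ → ℕ := fun p => R.iota (ξ p.1) (ξ p.2) with hcdef
  set B : Finset (ℕ × ℕ) := G.Astar.filter (fun p => ∃ L ∈ 𝓛, p ∈ L.Astar) with hBdef
  have hBsub : B ⊆ G.Astar := Finset.filter_subset _ _
  have hBsubA : ∀ p ∈ B, p ∈ G.A := fun p hp => Finset.mem_of_mem_filter p (hBsub hp)
  have hLB : ∀ L ∈ 𝓛, L.Astar ⊆ B := by
    intro L hL q hq
    have hqA : q ∈ L.A := Finset.mem_of_mem_filter q hq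
    have hqprop : q.1 ≠ q.2 := (Finset.mem_filter.mp hq).2
    exact Finset.mem_filter.mpr
      ⟨Finset.mem_filter.mpr ⟨(h𝓛 L hL).2 hqA, hqprop⟩, L, hL, hq⟩
  have hmemB : ∀ p, p ∈ B ↔ ∃ L ∈ 𝓛, p ∈ L.Astar := by
    intro p
    constructor
    · intro hp; exact (Finset.mem_filter.mp hp).2
    · rintro ⟨L, hL, hp⟩; exact hLB L hL hp
  -- the J-sets as finsets
  have hJset : ∀ H' : Dgraph, JSet G R H' 𝓛 ξ
      = ↑((Aux6.homFinset G H').filter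
          (fun ζ => ∀ p ∈ B, H'.iota (ζ p.1) (ζ p.2) = c p)) := by
    intro H'
    ext ζ
    simp only [JSet, Set.mem_setOf_eq, Finset.coe_filter, Aux6.mem_homFinset]
    constructor
    · rintro ⟨hζ, hcond⟩
      refine ⟨hζ, fun p hp => ?_⟩
      obtain ⟨L, hL, hpL⟩ := (hmemB p).mp hp
      exact hcond L hL p hpL
    · rintro ⟨hζ, hcond⟩
      exact ⟨hζ, fun L hL p hp => hcond p (hLB L hL hp)⟩
  rw [hJset R, hJset S, Set.ncard_coe_finset, Set.ncard_coe_finset]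
  -- the crucial sum bound coming from μ-maximality
  have key : ∀ (H : Dgraph) (θ : ℕ → ℕ), θ ∈ Hom G H →
      (∀ L ∈ 𝓛, Dgraph.restrict L.V θ ∈ MSet L H) →
      (∀ L ∈ 𝓛, ∀ p ∈ L.Astar, H.iota (θ p.1) (θ p.2) = c p) →
      ∀ ζ ∈ Hom G H, ∀ L ∈ 𝓛,
        ∑ p ∈ L.Astar, H.iota (ζ p.1) (ζ p.2) ≤ ∑ p ∈ L.Astar, c p := by
    intro H θ hθ hθM hθc ζ hζ L hL
    have h1 : Dgraph.restrict L.V ζ ∈ Hom L H := Aux6.hom_restrict (h𝓛 L hL) hζ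
    have h2 := (hθM L hL).2 _ h1
    rw [Aux6.mu_restrict_eq, Aux6.mu_restrict_eq] at h2
    calc ∑ p ∈ L.Astar, H.iota (ζ p.1) (ζ p.2)
        ≤ ∑ p ∈ L.Astar, H.iota (θ p.1) (θ p.2) := h2
      _ = ∑ p ∈ L.Astar, c p := Finset.sum_congr rfl (fun p hp => hθc L hL p hp)
  have keyR : ∀ ζ ∈ Hom G R, ∀ L ∈ 𝓛,
      ∑ p ∈ L.Astar, R.iota (ζ p.1) (ζ p.2) ≤ ∑ p ∈ L.Astar, c p :=
    key R ξ hξ.1 hξ.2 (fun L hL p hp => rfl)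
  have keyS : ∀ ζ ∈ Hom G S, ∀ L ∈ 𝓛,
      ∑ p ∈ L.Astar, S.iota (ζ p.1) (ζ p.2) ≤ ∑ p ∈ L.Astar, c p :=
    key S ζ₀ hζ₀M.1 hζ₀M.2 hζ₀I
  -- the finite set of "bad" profiles
  set profR : (ℕ → ℕ) → (ℕ × ℕ) → ℕ :=
    fun ζ p => if p ∈ B then R.iota (ζ p.1) (ζ p.2) else 0 with hprofR
  set profS : (ℕ → ℕ) → (ℕ × ℕ) → ℕ :=
    fun ζ p => if p ∈ B then S.iota (ζ p.1) (ζ p.2) else 0 with hprofS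
  set D : Finset ((ℕ × ℕ) → ℕ) :=
    (((Aux6.homFinset G R).image profR) ∪ ((Aux6.homFinset G S).image profS)).filter
      (fun d => ∃ p ∈ B, d p ≠ c p) with hDdef
  have hDmem : ∀ d ∈ D, (∃ p ∈ B, d p ≠ c p) ∧
      ((∃ ζ ∈ Hom G R, ∀ p ∈ B, d p = R.iota (ζ p.1) (ζ p.2)) ∨
       (∃ ζ ∈ Hom G S, ∀ p ∈ B, d p = S.iota (ζ p.1) (ζ p.2))) := by
    intro d hd
    rw [hDdef, Finset.mem_filter] at hd
    obtain ⟨hd1, hd2⟩ := hd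
    refine ⟨hd2, ?_⟩
    rcases Finset.mem_union.mp hd1 with h | h <;>
      obtain ⟨ζ, hζ, rfl⟩ := Finset.mem_image.mp h
    · exact Or.inl ⟨ζ, Aux6.mem_homFinset.mp hζ,
        fun p hp => by simp only [hprofR, if_pos hp]⟩
    · exact Or.inr ⟨ζ, Aux6.mem_homFinset.mp hζ,
        fun p hp => by simp only [hprofS, if_pos hp]⟩
  -- separating exponents
  obtain ⟨k, hk⟩ := Aux6.exists_exponents B c D {F | ∃ L ∈ 𝓛, F = L.Astar}
    (by
      intro p hp
      obtain ⟨L, hL, hpL⟩ := (hmemB p).mp hp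
      exact ⟨L.Astar, ⟨L, hL, rfl⟩, hpL, hLB L hL⟩)
    (fun p hp => Aux6.iota_pos hRr hξ.1 (hBsubA p hp))
    (by
      intro d hd p hp
      rcases (hDmem d hd).2 with ⟨ζ, hζ, hdp⟩ | ⟨ζ, hζ, hdp⟩
      · rw [hdp p hp]; exact Aux6.iota_pos hRr hζ (hBsubA p hp)
      · rw [hdp p hp]; exact Aux6.iota_pos hSr hζ (hBsubA p hp))
    (by
      rintro d hd F ⟨L, hL, rfl⟩ hFB
      rcases (hDmem d hd).2 with ⟨ζ, hζ, hdp⟩ | ⟨ζ, hζ, hdp⟩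
      · calc ∑ p ∈ L.Astar, d p
            = ∑ p ∈ L.Astar, R.iota (ζ p.1) (ζ p.2) :=
              Finset.sum_congr rfl (fun p hp => hdp p (hLB L hL hp))
          _ ≤ ∑ p ∈ L.Astar, c p := keyR ζ hζ L hL
      · calc ∑ p ∈ L.Astar, d p
            = ∑ p ∈ L.Astar, S.iota (ζ p.1) (ζ p.2) :=
              Finset.sum_congr rfl (fun p hp => hdp p (hLB L hL hp))
          _ ≤ ∑ p ∈ L.Astar, c p := keyS ζ hζ L hL)
    (fun d hd => (hDmem d hd).1)
  set P : ℕ := ∏ p ∈ B, (c p) ^ (k p) with hPdef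
  have hP1 : 1 ≤ P :=
    Finset.one_le_prod' (fun p hp =>
      Nat.one_le_pow _ _ (Aux6.iota_pos hRr hξ.1 (hBsubA p hp)))
  -- the master inequality, for every m
  have main : ∀ m : ℕ,
      ∑ ζ ∈ Aux6.homFinset G R, ∏ p ∈ B, (R.iota (ζ p.1) (ζ p.2)) ^ (m * k p)
        ≤ ∑ ζ ∈ Aux6.homFinset G S, ∏ p ∈ B, (S.iota (ζ p.1) (ζ p.2)) ^ (m * k p) := by
    intro m
    have h1 := hHom (Aux6.gadget G B hBsub (fun p => m * k p))
      (Aux6.gadget_memTa G B hBsub (fun p => m * k p) hGt)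
    rwa [Aux6.ncard_hom, Aux6.ncard_hom, Aux6.gadget_card, Aux6.gadget_card] at h1
  -- decompose both sides into matching and non-matching parts
  have hmatch : ∀ (H : Dgraph) (m : ℕ),
      ∑ ζ ∈ (Aux6.homFinset G H).filter
          (fun ζ => ∀ p ∈ B, H.iota (ζ p.1) (ζ p.2) = c p),
        ∏ p ∈ B, (H.iota (ζ p.1) (ζ p.2)) ^ (m * k p)
      = ((Aux6.homFinset G H).filter
          (fun ζ => ∀ p ∈ B, H.iota (ζ p.1) (ζ p.2) = c p)).card * P ^ m := by
    intro H m
    have hterm : ∀ ζ ∈ (Aux6.homFinset G H).filter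
        (fun ζ => ∀ p ∈ B, H.iota (ζ p.1) (ζ p.2) = c p),
        ∏ p ∈ B, (H.iota (ζ p.1) (ζ p.2)) ^ (m * k p) = P ^ m := by
      intro ζ hζ
      have hζ2 := (Finset.mem_filter.mp hζ).2
      calc ∏ p ∈ B, (H.iota (ζ p.1) (ζ p.2)) ^ (m * k p)
          = ∏ p ∈ B, ((c p) ^ (k p)) ^ m := by
            refine Finset.prod_congr rfl (fun p hp => ?_)
            rw [hζ2 p hp, mul_comm m (k p), pow_mul]
        _ = P ^ m := by rw [hPdef, ← Finset.prod_pow]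
    rw [Finset.sum_congr rfl hterm, Finset.sum_const, smul_eq_mul]
  have hnonmatch : ∀ (H : Dgraph), H = R ∨ H = S → ∀ (m : ℕ),
      ∑ ζ ∈ (Aux6.homFinset G H).filter
          (fun ζ => ¬ ∀ p ∈ B, H.iota (ζ p.1) (ζ p.2) = c p),
        ∏ p ∈ B, (H.iota (ζ p.1) (ζ p.2)) ^ (m * k p)
      ≤ (Aux6.homFinset G H).card * (P - 1) ^ m := by
    intro H hH m
    calc ∑ ζ ∈ (Aux6.homFinset G H).filter
          (fun ζ => ¬ ∀ p ∈ B, H.iota (ζ p.1) (ζ p.2) = c p),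
        ∏ p ∈ B, (H.iota (ζ p.1) (ζ p.2)) ^ (m * k p)
        ≤ ∑ _ζ ∈ (Aux6.homFinset G H).filter
          (fun ζ => ¬ ∀ p ∈ B, H.iota (ζ p.1) (ζ p.2) = c p), (P - 1) ^ m := by
          refine Finset.sum_le_sum (fun ζ hζ => ?_)
          obtain ⟨hζ1, hζ2⟩ := Finset.mem_filter.mp hζ
          push_neg at hζ2
          obtain ⟨p0, hp0, hp0ne⟩ := hζ2
          -- the profile of ζ is in D
          have hdD : (fun p => if p ∈ B then H.iota (ζ p.1) (ζ p.2) else 0) ∈ D := by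
            rw [hDdef, Finset.mem_filter]
            constructor
            · rcases hH with rfl | rfl
              · exact Finset.mem_union_left _ (Finset.mem_image_of_mem _ hζ1)
              · exact Finset.mem_union_right _ (Finset.mem_image_of_mem _ hζ1)
            · exact ⟨p0, hp0, by beta_reduce; rw [if_pos hp0]; exact hp0ne⟩
          have hkd := hk _ hdD
          beta_reduce at hkd
          have heq : ∏ p ∈ B, (if p ∈ B then H.iota (ζ p.1) (ζ p.2) else 0) ^ (k p)
              = ∏ p ∈ B, (H.iota (ζ p.1) (ζ p.2)) ^ (k p) :=
            Finset.prod_congr rfl (fun p hp => by rw [if_pos hp])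
          rw [heq] at hkd
          have hle : ∏ p ∈ B, (H.iota (ζ p.1) (ζ p.2)) ^ (k p) ≤ P - 1 :=
            Nat.le_pred_of_lt hkd
          calc ∏ p ∈ B, (H.iota (ζ p.1) (ζ p.2)) ^ (m * k p)
              = (∏ p ∈ B, (H.iota (ζ p.1) (ζ p.2)) ^ (k p)) ^ m := by
                rw [← Finset.prod_pow]
                exact Finset.prod_congr rfl
                  (fun p hp => by rw [mul_comm m (k p), pow_mul])
            _ ≤ (P - 1) ^ m := Nat.pow_le_pow_left hle m
      _ = ((Aux6.homFinset G H).filter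
          (fun ζ => ¬ ∀ p ∈ B, H.iota (ζ p.1) (ζ p.2) = c p)).card * (P - 1) ^ m := by
          rw [Finset.sum_const, smul_eq_mul]
      _ ≤ (Aux6.homFinset G H).card * (P - 1) ^ m :=
          Nat.mul_le_mul_right _ (Finset.card_filter_le _ _)
  -- conclude by contradiction
  by_contra hcon
  push_neg at hcon
  set JR := ((Aux6.homFinset G R).filter
    (fun ζ => ∀ p ∈ B, R.iota (ζ p.1) (ζ p.2) = c p)).card with hJR
  set JS := ((Aux6.homFinset G S).filter
    (fun ζ => ∀ p ∈ B, S.iota (ζ p.1) (ζ p.2) = c p)).card with hJS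
  set A : ℕ := (Aux6.homFinset G S).card with hA
  have hfinal : ∀ m : ℕ, P ^ m ≤ A * (P - 1) ^ m := by
    intro m
    have h1 : JR * P ^ m ≤
        ∑ ζ ∈ Aux6.homFinset G R, ∏ p ∈ B, (R.iota (ζ p.1) (ζ p.2)) ^ (m * k p) := by
      rw [← Finset.sum_filter_add_sum_filter_not (Aux6.homFinset G R)
        (fun ζ => ∀ p ∈ B, R.iota (ζ p.1) (ζ p.2) = c p)]
      rw [hmatch R m]
      exact Nat.le_add_right _ _
    have h2 : ∑ ζ ∈ Aux6.homFinset G S, ∏ p ∈ B, (S.iota (ζ p.1) (ζ p.2)) ^ (m * k p)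
        ≤ JS * P ^ m + A * (P - 1) ^ m := by
      rw [← Finset.sum_filter_add_sum_filter_not (Aux6.homFinset G S)
        (fun ζ => ∀ p ∈ B, S.iota (ζ p.1) (ζ p.2) = c p)]
      rw [hmatch S m]
      exact Nat.add_le_add_left (hnonmatch S (Or.inr rfl) m) _
    have h3 := le_trans h1 (le_trans (main m) h2)
    have h4 : JS + 1 ≤ JR := hcon
    have h5 : (JS + 1) * P ^ m ≤ JR * P ^ m := Nat.mul_le_mul_right _ h4
    have h6 : JS * P ^ m + P ^ m ≤ JR * P ^ m := by
      rw [← add_one_mul]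
      exact h5
    linarith [h3, h6]
  exact Aux6.pow_contra hP1 hfinal
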